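/- Let G be a connected graph with adjacent vertices u, v such that G' = G - {u,v} is connected. Suppose a minimum tree cover T' of G' contains a tree T_w with exactly two vertices {w, x}, and there exists y ∈ N(w) ∩ N(x) such that the tree T_y of T' containing y satisfies N(x) ∩ V(T_y) = {y}. If u is adjacent to w and v is not adjacent to w, then T(G) ≤ T(G'). -/

import Mathlib

open SimpleGraph

/-- A tree cover of `G`: vertex-disjoint induced subtrees covering all vertices. -/
def IsTreeCover {V : Type} (G : SimpleGraph V) (C : Finset (Set V)) : Prop :=
  (∀ s ∈ C, (G.induce s).IsTree) ∧ (∀ v : V, ∃ s ∈ C, v ∈ s) ∧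
    (C : Set (Set V)).PairwiseDisjoint id

/-- The tree cover number: minimum cardinality of a tree cover. -/
noncomputable def treeCoverNumber {V : Type} (G : SimpleGraph V) : ℕ :=
  sInf {n | ∃ C : Finset (Set V), IsTreeCover G C ∧ C.card = n}

section Aux

variable {V W : Type}

lemma isTree_of_iso {G : SimpleGraph V} {H : SimpleGraph W} (e : G ≃g H) (h : G.IsTree) :
    H.IsTree := by
  refine ⟨e.connected_iff.mp h.isConnected, ?_⟩
  intro z c hc
  refine h.IsAcyclic (c.map e.symm.toHom) ?_
  exact (SimpleGraph.Walk.map_isCycle_iff_of_injective (by exact e.symm.injective)).mpr hc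

/-- iso between `(G.induce S).induce s` and `G.induce (val '' s)`. -/
noncomputable def induceInduceIso (G : SimpleGraph V) (S : Set V) (s : Set S) :
    ((G.induce S).induce s) ≃g (G.induce (Subtype.val '' s)) where
  toEquiv := (Equiv.Set.image Subtype.val s Subtype.val_injective)
  map_rel_iff' := Iff.rfl

lemma isTree_singleton (G : SimpleGraph V) (p : V) : (G.induce ({p} : Set V)).IsTree := by
  constructor
  · have hpre : (G.induce ({p} : Set V)).Preconnected := by
      intro a b
      have : a = b := Subtype.ext ((a.2 : (a : V) = p).trans (b.2 : (b : V) = p).symm)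
      exact this ▸ SimpleGraph.Reachable.refl _
    haveI : Nonempty ({p} : Set V) := ⟨⟨p, rfl⟩⟩
    exact ⟨hpre⟩
  · intro z c hc
    cases c with
    | nil => exact hc.ne_nil rfl
    | cons h q =>
      rename_i b
      have h1 : (z : V) = p := z.2
      have hb : (b : V) = p := b.2
      have hG : G.Adj (z : V) (b : V) := h
      rw [h1, hb] at hG
      exact G.irrefl hG

lemma exists_first_edge {G : SimpleGraph V} {a b : V} (p : G.Walk a b) (h : a ≠ b) :
    ∃ c, G.Adj a c ∧ s(a, c) ∈ p.edges := by
  cases p with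
  | nil => exact absurd rfl h
  | cons h q => exact ⟨_, h, by simp⟩

lemma exists_walk_induce {G : SimpleGraph V} {s t : Set V} (hst : s ⊆ t) :
    ∀ {a b : t} (p : (G.induce t).Walk a b) (hv : (a : V) ∈ s) (hw : (b : V) ∈ s),
    (∀ z ∈ p.support, (z : V) ∈ s) →
    ∃ q : (G.induce s).Walk ⟨a, hv⟩ ⟨b, hw⟩,
      q.support.map (fun z : s => (⟨z, hst z.2⟩ : t)) = p.support ∧
      q.edges.map (Sym2.map (fun z : s => (⟨z, hst z.2⟩ : t))) = p.edges := by
  intro a b p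
  induction p with
  | nil =>
    intro hv hw _
    exact ⟨SimpleGraph.Walk.nil, by simp, by simp⟩
  | @cons c d e h q ih =>
    intro hv hw hsup
    have hd : (d : V) ∈ s := hsup d (by simp [SimpleGraph.Walk.support_cons])
    obtain ⟨q', hq1, hq2⟩ := ih hd hw (fun z hz => hsup z (by simp [SimpleGraph.Walk.support_cons, hz]))
    refine ⟨SimpleGraph.Walk.cons (by exact h) q', ?_, ?_⟩
    · exact congrArg (c :: ·) hq1
    · exact congrArg (s(c, d) :: ·) hq2

lemma isTree_insert_leaf {G : SimpleGraph V} {s : Set V} {a y : V}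
    (ha : a ∉ s) (hy : y ∈ s) (hay : G.Adj a y)
    (hnbr : ∀ z ∈ s, G.Adj a z → z = y)
    (hT : (G.induce s).IsTree) : (G.induce (insert a s)).IsTree := by
  have hsub : s ⊆ insert a s := Set.subset_insert a s
  set H := G.induce (insert a s) with hH
  have hNbrH : ∀ z : (insert a s : Set V), H.Adj ⟨a, Set.mem_insert a s⟩ z → (z : V) = y := by
    rintro ⟨z, hz⟩ hadj
    have hGz : G.Adj a z := hadj
    rcases hz with rfl | hz
    · exact absurd hGz (G.irrefl)
    · exact hnbr z hz hGz
  have hreach : ∀ c : (insert a s : Set V), H.Reachable c ⟨y, hsub hy⟩ := by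
    rintro ⟨z, hz⟩
    rcases hz with rfl | hz
    · exact SimpleGraph.Adj.reachable (by exact hay)
    · have := hT.isConnected.preconnected ⟨z, hz⟩ ⟨y, hy⟩
      exact this.map (G.induceHomOfLE hsub).toHom
  constructor
  · have hpre : H.Preconnected := fun c d => (hreach c).trans (hreach d).symm
    haveI : Nonempty (insert a s : Set V) := ⟨⟨a, Set.mem_insert a s⟩⟩
    exact ⟨hpre⟩
  · intro z c hc
    classical
    by_cases hA : (⟨a, Set.mem_insert a s⟩ : (insert a s : Set V)) ∈ c.support
    · -- cycle through a: contradiction from unique neighbor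
      have hq := hc.rotate hA
      set q := c.rotate _ hA with hqdef
      clear_value q
      cases q with
      | nil => exact hq.ne_nil rfl
      | cons h r =>
        rename_i b
        have hb : (b : V) = y := hNbrH b h
        have hndp := hq.edges_nodup
        rw [SimpleGraph.Walk.edges_cons, List.nodup_cons] at hndp
        have hab : (⟨a, Set.mem_insert a s⟩ : (insert a s : Set V)) ≠ b := by
          intro hh
          have hay' : a = y := (congrArg Subtype.val hh).trans hb
          exact ha (by rw [hay']; exact hy)
        obtain ⟨cc, hadj, hmem⟩ := exists_first_edge r.reverse hab
        have hcc : cc = b := Subtype.ext ((hNbrH cc hadj).trans hb.symm)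
        rw [hcc, SimpleGraph.Walk.edges_reverse, List.mem_reverse] at hmem
        exact hndp.1 hmem
    · -- cycle avoiding a: transfer to induce s
      have hsupp : ∀ t ∈ c.support, ((t : (insert a s : Set V)) : V) ∈ s := by
        intro t ht
        rcases t.2 with h1 | h1
        · have ht' : t = ⟨a, Set.mem_insert a s⟩ := Subtype.ext h1
          exact absurd (ht' ▸ ht) hA
        · exact h1
      have hzs : ((z : (insert a s : Set V)) : V) ∈ s := hsupp z c.start_mem_support
      obtain ⟨q, hq1, hq2⟩ := exists_walk_induce hsub c hzs hzs hsupp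
      rw [SimpleGraph.Walk.isCycle_def] at hc
      refine hT.IsAcyclic q ?_
      rw [SimpleGraph.Walk.isCycle_def]
      refine ⟨?_, ?_, ?_⟩
      · rw [SimpleGraph.Walk.isTrail_def]
        have := hc.1.edges_nodup
        rw [← hq2] at this
        exact this.of_map _
      · intro hnil
        apply hc.2.1
        rw [SimpleGraph.Walk.eq_nil_iff_nil, ← SimpleGraph.Walk.length_eq_zero_iff]
        have h1 : c.support.length = q.support.length := by rw [← hq1, List.length_map]
        rw [SimpleGraph.Walk.length_support, SimpleGraph.Walk.length_support, hnil] at h1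
        simpa using h1
      · have := hc.2.2
        rw [← hq1, ← List.map_tail] at this
        exact this.of_map _

end Aux

theorem stmt_15 {V : Type} [Fintype V] (G : SimpleGraph V) (hG : G.Connected) (u v : V)
    (huv : G.Adj u v) (hG' : (G.induce ({u, v}ᶜ : Set V)).Connected)
    (C' : Finset (Set ({u, v}ᶜ : Set V)))
    (hC' : IsTreeCover (G.induce ({u, v}ᶜ : Set V)) C')
    (hmin : C'.card = treeCoverNumber (G.induce ({u, v}ᶜ : Set V)))
    (w x y : ({u, v}ᶜ : Set V)) (Tw Ty : Set ({u, v}ᶜ : Set V))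
    (hTw : Tw ∈ C') (hwTw : Tw = {w, x}) (hwx : w ≠ x)
    (hyw : (G.induce ({u, v}ᶜ : Set V)).Adj w y)
    (hyx : (G.induce ({u, v}ᶜ : Set V)).Adj x y)
    (hTy : Ty ∈ C') (hyTy : y ∈ Ty)
    (hN : {z | (G.induce ({u, v}ᶜ : Set V)).Adj x z} ∩ Ty = {y})
    (huw : G.Adj u ↑w) (hvw : ¬ G.Adj v ↑w) :
    treeCoverNumber G ≤ treeCoverNumber (G.induce ({u, v}ᶜ : Set V)) := by
  classical
  -- basic facts about elements of S
  have hne : ∀ z : ({u, v}ᶜ : Set V), (z : V) ≠ u ∧ (z : V) ≠ v := by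
    rintro ⟨z, hz⟩
    have : z ∉ ({u, v} : Set V) := hz
    simp only [Set.mem_insert_iff, Set.mem_singleton_iff, not_or] at this
    exact this
  -- y is in neither position of Tw
  have hyw' : w ≠ y := hyw.ne
  have hyx' : x ≠ y := hyx.ne
  have hyTw : y ∉ Tw := by
    rw [hwTw]
    rintro (rfl | rfl)
    · exact hyw' rfl
    · exact hyx' rfl
  have hTwTy : Tw ≠ Ty := fun h => hyTw (h ▸ hyTy)
  have hdj : ∀ t1 ∈ C', ∀ t2 ∈ C', t1 ≠ t2 → ∀ z, z ∈ t1 → z ∈ t2 → False := by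
    intro t1 h1 t2 h2 hne12 z hz1 hz2
    exact Set.disjoint_left.mp
      (hC'.2.2 (Finset.mem_coe.mpr h1) (Finset.mem_coe.mpr h2) hne12) hz1 hz2
  have hwTwmem : w ∈ Tw := by rw [hwTw]; exact Set.mem_insert _ _
  have hxTwmem : x ∈ Tw := by rw [hwTw]; exact Set.mem_insert_of_mem _ rfl
  have hxTy : x ∉ Ty := fun h => hdj Tw hTw Ty hTy hTwTy x hxTwmem h
  have hwTy : w ∉ Ty := fun h => hdj Tw hTw Ty hTy hTwTy w hwTwmem h
  -- the new cover
  set F : Set ({u, v}ᶜ : Set V) → Set V := fun t => Subtype.val '' t with hF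
  set A : Set V := insert v (insert (↑w : V) ({u} : Set V)) with hA
  set B : Set V := insert (↑x : V) (F Ty) with hB
  set E : Finset (Set ({u, v}ᶜ : Set V)) := (C'.erase Tw).erase Ty with hE
  set D : Finset (Set V) := insert A (insert B (E.image F)) with hD
  have hmemE : ∀ t : Set ({u, v}ᶜ : Set V), t ∈ E ↔ t ≠ Ty ∧ t ≠ Tw ∧ t ∈ C' := by
    intro t
    simp [hE, Finset.mem_erase, and_assoc]
  -- trees
  have treeA : (G.induce A).IsTree := by
    have t1 := isTree_singleton G u
    have t2 : (G.induce (insert (↑w : V) ({u} : Set V))).IsTree := by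
      refine isTree_insert_leaf ?_ rfl huw.symm ?_ t1
      · simp [(hne w).1]
      · rintro z rfl _; rfl
    refine isTree_insert_leaf ?_ ?_ huv.symm ?_ t2
    · simp only [Set.mem_insert_iff, Set.mem_singleton_iff, not_or]
      exact ⟨fun h => (hne w).2 h.symm, fun h => G.irrefl (h ▸ huv)⟩
    · exact Set.mem_insert_of_mem _ rfl
    · rintro z (rfl | rfl) hadj
      · exact absurd hadj hvw
      · rfl
  have treeIm : ∀ t ∈ C', (G.induce (F t)).IsTree := by
    intro t ht
    exact isTree_of_iso (induceInduceIso G ({u, v}ᶜ : Set V) t) (hC'.1 t ht)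
  have treeB : (G.induce B).IsTree := by
    refine isTree_insert_leaf (y := (↑y : V)) ?_ ⟨y, hyTy, rfl⟩ hyx ?_ (treeIm Ty hTy)
    · rintro ⟨t, ht, hteq⟩
      exact hxTy (Subtype.ext hteq.symm ▸ ht)
    · rintro z ⟨t, ht, rfl⟩ hadj
      have h1 : (G.induce ({u, v}ᶜ : Set V)).Adj x t := hadj
      have h2 : t ∈ ({z | (G.induce ({u, v}ᶜ : Set V)).Adj x z} ∩ Ty) := ⟨h1, ht⟩
      rw [hN] at h2
      exact congrArg Subtype.val h2
  -- the new cover is a tree cover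
  have hcover : IsTreeCover G D := by
    refine ⟨?_, ?_, ?_⟩
    · intro s hs
      rw [hD, Finset.mem_insert, Finset.mem_insert] at hs
      rcases hs with rfl | rfl | hs
      · exact treeA
      · exact treeB
      · obtain ⟨t, ht, rfl⟩ := Finset.mem_image.mp hs
        exact treeIm t ((hmemE t).mp ht).2.2
    · intro p
      by_cases hpu : p = u
      · exact ⟨A, Finset.mem_insert_self _ _, by simp [hA, hpu]⟩
      by_cases hpv : p = v
      · exact ⟨A, Finset.mem_insert_self _ _, by simp [hA, hpv]⟩
      have hpS : p ∈ ({u, v}ᶜ : Set V) := by simp [Set.mem_insert_iff, hpu, hpv]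
      obtain ⟨t, ht, hpt⟩ := hC'.2.1 ⟨p, hpS⟩
      by_cases htw : t = Tw
      · rw [htw, hwTw] at hpt
        rcases hpt with h | h
        · refine ⟨A, Finset.mem_insert_self _ _, ?_⟩
          have : p = (↑w : V) := congrArg Subtype.val h
          simp [hA, this]
        · refine ⟨B, Finset.mem_insert_of_mem (Finset.mem_insert_self _ _), ?_⟩
          have : p = (↑x : V) := congrArg Subtype.val h
          simp [hB, this]
      by_cases hty : t = Ty
      · subst hty
        exact ⟨B, Finset.mem_insert_of_mem (Finset.mem_insert_self _ _),
          Set.mem_insert_of_mem _ ⟨⟨p, hpS⟩, hpt, rfl⟩⟩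
      · refine ⟨F t, ?_, ⟨⟨p, hpS⟩, hpt, rfl⟩⟩
        exact Finset.mem_insert_of_mem (Finset.mem_insert_of_mem
          (Finset.mem_image_of_mem F ((hmemE t).mpr ⟨hty, htw, ht⟩)))
    · -- pairwise disjoint
      have hvalne : ∀ (t : Set ({u, v}ᶜ : Set V)) (z : V), z ∈ F t → z ≠ u ∧ z ≠ v := by
        rintro t z ⟨t1, _, rfl⟩
        exact hne t1
      have hFdisj : ∀ t1 ∈ C', ∀ t2 ∈ C', t1 ≠ t2 → Disjoint (F t1) (F t2) := by
        intro t1 h1 t2 h2 hne12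
        rw [Set.disjoint_left]
        rintro z ⟨z1, hz1, rfl⟩ ⟨z2, hz2, hzeq⟩
        have : z2 = z1 := Subtype.ext hzeq
        exact hdj t1 h1 t2 h2 hne12 z1 hz1 (this ▸ hz2)
      have hwF : ∀ t ∈ C', t ≠ Tw → (↑w : V) ∉ F t := by
        rintro t ht htne ⟨z, hz, hzeq⟩
        exact hdj t ht Tw hTw htne z hz (Subtype.ext hzeq ▸ hwTwmem)
      have hxF : ∀ t ∈ C', t ≠ Tw → (↑x : V) ∉ F t := by
        rintro t ht htne ⟨z, hz, hzeq⟩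
        exact hdj t ht Tw hTw htne z hz (Subtype.ext hzeq ▸ hxTwmem)
      have hAB : Disjoint A B := by
        rw [Set.disjoint_left]
        rintro z (rfl | rfl | rfl)
        · rintro (h | h)
          · exact (hne x).2 h.symm
          · exact ((hvalne Ty _ h).2) rfl
        · rintro (h | h)
          · exact hwx (Subtype.ext h)
          · exact hwTy (by obtain ⟨t, ht, hteq⟩ := h; exact (Subtype.ext hteq.symm ▸ ht))
        · rintro (h | h)
          · exact (hne x).1 h.symm
          · exact ((hvalne Ty _ h).1) rfl
      have hAIm : ∀ t ∈ E, Disjoint A (F t) := by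
        intro t ht
        obtain ⟨hty, htw, htc⟩ := (hmemE t).mp ht
        rw [Set.disjoint_left]
        rintro z (rfl | rfl | rfl) hz
        · exact (hvalne t _ hz).2 rfl
        · exact hwF t htc htw hz
        · exact (hvalne t _ hz).1 rfl
      have hBIm : ∀ t ∈ E, Disjoint B (F t) := by
        intro t ht
        obtain ⟨hty, htw, htc⟩ := (hmemE t).mp ht
        rw [Set.disjoint_left]
        rintro z (rfl | hz) hz'
        · exact hxF t htc htw hz'
        · exact Set.disjoint_left.mp (hFdisj Ty hTy t htc (Ne.symm hty)) hz hz'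
      intro s1 hs1 s2 hs2 hne12
      simp only [hD, Finset.coe_insert, Set.mem_insert_iff, Finset.mem_coe,
        Finset.mem_image] at hs1 hs2
      rcases hs1 with rfl | rfl | ⟨t1, ht1, rfl⟩ <;>
        rcases hs2 with rfl | rfl | ⟨t2, ht2, rfl⟩
      · exact absurd rfl hne12
      · exact hAB
      · exact hAIm t2 ht2
      · exact hAB.symm
      · exact absurd rfl hne12
      · exact hBIm t2 ht2
      · exact (hAIm t1 ht1).symm
      · exact (hBIm t1 ht1).symm
      · refine hFdisj t1 ((hmemE t1).mp ht1).2.2 t2 ((hmemE t2).mp ht2).2.2 ?_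
        rintro rfl
        exact hne12 rfl
  -- cardinality
  have hTyE : Ty ∈ C'.erase Tw := Finset.mem_erase.mpr ⟨hTwTy.symm, hTy⟩
  have hcard2 : E.card = C'.card - 2 := by
    rw [hE, Finset.card_erase_of_mem hTyE, Finset.card_erase_of_mem hTw]
    omega
  have h2le : 2 ≤ C'.card := by
    have := Finset.one_lt_card.mpr ⟨Tw, hTw, Ty, hTy, hTwTy⟩
    omega
  have hDcard : D.card ≤ C'.card := by
    calc D.card ≤ (insert B (E.image F)).card + 1 := Finset.card_insert_le _ _
      _ ≤ (E.image F).card + 1 + 1 := by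
          have := Finset.card_insert_le B (E.image F); omega
      _ ≤ E.card + 2 := by have := Finset.card_image_le (f := F) (s := E); omega
      _ ≤ C'.card := by omega
  have hfin : treeCoverNumber G ≤ D.card := Nat.sInf_le ⟨D, hcover, rfl⟩
  calc treeCoverNumber G ≤ D.card := hfin
    _ ≤ C'.card := hDcard
    _ = treeCoverNumber (G.induce ({u, v}ᶜ : Set V)) := hmin
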